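/- Let W₁, W₂ : ℝ → (0,∞) be weights with |∂ₓ(W₁W₂)(x)| ≲ W₁(x)² and W₂(x) ≲ (1+x²)^{1/2}·W₁(x) for all x, and set W = W₁^{1/2}W₂^{1/2}. If f : ℝ → ℝ satisfies W₁f ∈ L²(ℝ) and W₂f' ∈ L²(ℝ), then Wf ∈ L^∞(ℝ), ‖Wf‖_{L^∞} ≲ ‖W₁f‖_{L²} + ‖W₂f'‖_{L²}, and moreover W(x)f(x) → 0 as |x| → ∞. -/

import Mathlib

open MeasureTheory Filter Set

/-- The `L²(ℝ)` norm. -/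
noncomputable def L2 (f : ℝ → ℝ) : ℝ := (∫ x : ℝ, (f x) ^ 2) ^ (1 / 2 : ℝ)

/-- If `g ≥ 0` tends to `L` at `+∞` and is dominated by `√(1+x²)` times an integrable
function, then `L = 0`. -/
lemma aux_lim_zero_atTop {g h : ℝ → ℝ} {L : ℝ}
    (hgL : Tendsto g atTop (nhds L)) (hg0 : ∀ x, 0 ≤ g x)
    (hh : Integrable h) (hbd : ∀ x, g x ≤ Real.sqrt (1 + x ^ 2) * h x) :
    L = 0 := by
  have hL0 : 0 ≤ L := ge_of_tendsto' hgL hg0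
  by_contra hne
  have hL : 0 < L := lt_of_le_of_ne hL0 (Ne.symm hne)
  obtain ⟨M', hM'⟩ := eventually_atTop.1 (hgL.eventually_const_lt (half_lt_self hL))
  set M : ℝ := max M' 1 with hM
  have key : ∀ x ∈ Ioi M, x⁻¹ ≤ (4 / L) * h x := by
    intro x hx
    have hx1 : 1 ≤ x := le_trans (le_max_right _ _) (le_of_lt hx)
    have hxpos : 0 < x := lt_of_lt_of_le zero_lt_one hx1
    have hgx : L / 2 < g x := hM' x (le_trans (le_max_left _ _) (le_of_lt hx))
    have hs : Real.sqrt (1 + x ^ 2) ≤ 2 * x := by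
      rw [show (2 : ℝ) * x = Real.sqrt ((2 * x) ^ 2) by
        rw [Real.sqrt_sq (by linarith)]]
      apply Real.sqrt_le_sqrt
      nlinarith
    have hhx : 0 ≤ h x := by
      by_contra hneg
      push_neg at hneg
      have := hbd x
      have hsq : 0 < Real.sqrt (1 + x ^ 2) := Real.sqrt_pos.2 (by positivity)
      nlinarith [hg0 x]
    have h1 : g x ≤ 2 * x * h x :=
      le_trans (hbd x) (mul_le_mul_of_nonneg_right hs hhx)
    rw [inv_le_iff_one_le_mul₀ hxpos]
    have : L / 2 ≤ 2 * x * h x := le_trans (le_of_lt hgx) h1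
    rw [show (4:ℝ) / L * h x * x = (4 * h x * x) / L from by ring, le_div_iff₀ hL]
    nlinarith
  have hint : IntegrableOn (fun x : ℝ => x⁻¹) (Ioi M) := by
    apply Integrable.mono' ((hh.const_mul (4 / L)).integrableOn (s := Ioi M))
    · exact measurable_inv.aestronglyMeasurable
    · rw [ae_restrict_iff' measurableSet_Ioi]
      filter_upwards with x hx
      have hxpos : (0 : ℝ) < x :=
        lt_of_lt_of_le zero_lt_one (le_trans (le_max_right _ _) (le_of_lt hx))
      rw [Real.norm_eq_abs, abs_of_nonneg (inv_nonneg.2 hxpos.le)]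
      exact key x hx
  exact not_IntegrableOn_Ioi_inv hint

/-- let `W₁, W₂ : ℝ → (0,∞)` with `|∂ₓ(W₁W₂)| ≲ W₁²` and
`W₂ ≲ (1+x²)^{1/2} W₁`, and set `W = W₁^{1/2} W₂^{1/2}`.  If `W₁ f ∈ L²` and `W₂ f' ∈ L²`,
then `Wf ∈ L^∞` with `‖Wf‖_{L^∞} ≲ ‖W₁f‖_{L²} + ‖W₂f'‖_{L²}` and `W(x)f(x) → 0` as
`|x| → ∞`. -/
theorem stmt10 (W₁ W₂ D : ℝ → ℝ) (A₁ A₂ : ℝ)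
    (hW₁pos : ∀ x, 0 < W₁ x) (hW₂pos : ∀ x, 0 < W₂ x)
    (hD : ∀ x : ℝ, HasDerivAt (fun t => W₁ t * W₂ t) (D x) x)
    (hDbd : ∀ x : ℝ, |D x| ≤ A₁ * (W₁ x) ^ 2)
    (hW₂bd : ∀ x : ℝ, W₂ x ≤ A₂ * (1 + x ^ 2) ^ (1 / 2 : ℝ) * W₁ x) :
    ∃ C : ℝ, ∀ f f' : ℝ → ℝ, (∀ x : ℝ, HasDerivAt f (f' x) x) →
      MemLp (fun x => W₁ x * f x) 2 volume →
      MemLp (fun x => W₂ x * f' x) 2 volume →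
      (∀ x : ℝ, Real.sqrt (W₁ x * W₂ x) * |f x|
          ≤ C * (L2 (fun y => W₁ y * f y) + L2 (fun y => W₂ y * f' y))) ∧
      Tendsto (fun x => Real.sqrt (W₁ x * W₂ x) * f x) (Filter.cocompact ℝ) (nhds 0) := by
  have hA₁ : 0 ≤ A₁ := by
    have h0 := hDbd 0
    have := hW₁pos 0
    nlinarith [abs_nonneg (D 0), pow_pos this 2]
  refine ⟨Real.sqrt (A₁ + 1), fun f f' hf hf1 hf2 => ?_⟩
  set g : ℝ → ℝ := fun x => W₁ x * W₂ x * f x ^ 2 with hgdef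
  set g' : ℝ → ℝ := fun x => D x * f x ^ 2 + W₁ x * W₂ x * (2 * f x * f' x) with hg'def
  have hg : ∀ x, HasDerivAt g (g' x) x := by
    intro x
    have := (hD x).mul ((hf x).pow 2)
    simpa [g, g', pow_one, mul_comm, mul_assoc, mul_left_comm, Pi.mul_def, Pi.pow_def] using this
  set h1 : ℝ → ℝ := fun x => (W₁ x * f x) ^ 2 with h1def
  set h2 : ℝ → ℝ := fun x => (W₂ x * f' x) ^ 2 with h2def
  have hh1 : Integrable h1 := hf1.integrable_sq
  have hh2 : Integrable h2 := hf2.integrable_sq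
  have hb : ∀ x, |g' x| ≤ (A₁ + 1) * h1 x + h2 x := by
    intro x
    have hW₁ := hW₁pos x
    have hW₂ := hW₂pos x
    have habs : |g' x| ≤ |D x| * f x ^ 2 + W₁ x * W₂ x * (2 * |f x| * |f' x|) := by
      refine le_trans (abs_add_le _ _) ?_
      rw [abs_mul, abs_mul, abs_of_nonneg (mul_pos hW₁ hW₂).le]
      gcongr
      · exact le_of_eq (by rw [abs_pow, sq_abs])
      · exact le_of_eq (by rw [abs_mul, abs_mul, abs_two])
    refine le_trans habs ?_
    have h2ab : W₁ x * W₂ x * (2 * |f x| * |f' x|) ≤ h1 x + h2 x := by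
      calc W₁ x * W₂ x * (2 * |f x| * |f' x|)
          = 2 * (W₁ x * |f x|) * (W₂ x * |f' x|) := by ring
        _ ≤ (W₁ x * |f x|) ^ 2 + (W₂ x * |f' x|) ^ 2 := two_mul_le_add_sq _ _
        _ = h1 x + h2 x := by simp [h1def, h2def, mul_pow, sq_abs]
    have hDterm : |D x| * f x ^ 2 ≤ A₁ * h1 x := by
      have := hDbd x
      simp only [h1def, mul_pow]
      nlinarith [sq_nonneg (f x)]
    nlinarith
  have hg'm : AEStronglyMeasurable g' volume := by
    have : g' = deriv g := funext fun x => ((hg x).deriv).symm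
    rw [this]
    exact (measurable_deriv g).aestronglyMeasurable
  have hdom : Integrable (fun x => (A₁ + 1) * h1 x + h2 x) := (hh1.const_mul _).add hh2
  have hg'int : Integrable g' := by
    refine hdom.mono' hg'm ?_
    filter_upwards with x
    rw [Real.norm_eq_abs]
    exact hb x
  have hg0 : ∀ x, 0 ≤ g x := fun x =>
    mul_nonneg (mul_pos (hW₁pos x) (hW₂pos x)).le (sq_nonneg _)
  have hgh : ∀ x, g x ≤ Real.sqrt (1 + x ^ 2) * (A₂ * h1 x) := by
    intro x
    have hbd := hW₂bd x
    rw [← Real.sqrt_eq_rpow] at hbd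
    have hW₁ := hW₁pos x
    have hsq : 0 ≤ Real.sqrt (1 + x ^ 2) := Real.sqrt_nonneg _
    simp only [hgdef, h1def, mul_pow]
    have key := mul_le_mul_of_nonneg_left hbd (mul_nonneg hW₁.le (sq_nonneg (f x)))
    nlinarith [key]
  have hhA : Integrable (fun x => A₂ * h1 x) := hh1.const_mul _
  -- limit at +∞
  have htop : Tendsto g atTop (nhds 0) := by
    have hlim := tendsto_limUnder_of_hasDerivAt_of_integrableOn_Ioi
      (a := 0) (fun x _ => hg x) hg'int.integrableOn
    have := aux_lim_zero_atTop hlim hg0 hhA hgh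
    rwa [this] at hlim
  -- limit at -∞
  have hbot : Tendsto g atBot (nhds 0) := by
    have hlim := tendsto_limUnder_of_hasDerivAt_of_integrableOn_Iic
      (a := 0) (fun x _ => hg x) hg'int.integrableOn
    have hcomp : Tendsto (fun x => g (-x)) atTop (nhds (limUnder atBot g)) :=
      hlim.comp tendsto_neg_atTop_atBot
    have hintneg : Integrable (fun x => A₂ * h1 (-x)) := by
      have : Integrable (fun x => A₂ * h1 ((-1 : ℝ) * x)) :=
        (integrable_comp_mul_left_iff (fun x => A₂ * h1 x) (by norm_num : (-1:ℝ) ≠ 0)).2 hhA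
      simpa using this
    have hzero : limUnder atBot g = 0 := by
      refine aux_lim_zero_atTop hcomp (fun x => hg0 (-x)) hintneg (fun x => ?_)
      have := hgh (-x)
      simpa using this
    rwa [hzero] at hlim
  constructor
  · -- the sup bound
    intro x
    have hFTC : ∫ y in Ioi x, g' y = 0 - g x :=
      integral_Ioi_of_hasDerivAt_of_tendsto' (fun y _ => hg y) hg'int.integrableOn htop
    have hgx : g x = -∫ y in Ioi x, g' y := by rw [hFTC]; ring
    have h1' : g x ≤ ∫ y in Ioi x, |g' y| := by
      rw [hgx]
      calc -∫ y in Ioi x, g' y ≤ |∫ y in Ioi x, g' y| := neg_le_abs _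
        _ ≤ ∫ y in Ioi x, |g' y| := by
            simpa [Real.norm_eq_abs] using
              norm_integral_le_integral_norm (μ := volume.restrict (Ioi x)) g'
    have h2' : ∫ y in Ioi x, |g' y| ≤ ∫ y, |g' y| :=
      setIntegral_le_integral hg'int.abs (by filter_upwards with y using abs_nonneg _)
    have h3' : ∫ y, |g' y| ≤ (A₁ + 1) * (∫ y, h1 y) + ∫ y, h2 y := by
      calc ∫ y, |g' y| ≤ ∫ y, ((A₁ + 1) * h1 y + h2 y) :=
            integral_mono hg'int.abs hdom hb
        _ = (A₁ + 1) * (∫ y, h1 y) + ∫ y, h2 y := by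
            rw [integral_add (hh1.const_mul _) hh2, integral_const_mul]
    set a : ℝ := L2 (fun y => W₁ y * f y) with hadef
    set b : ℝ := L2 (fun y => W₂ y * f' y) with hbdef
    have hia : ∫ y, h1 y = a ^ 2 := by
      rw [hadef, L2, ← Real.sqrt_eq_rpow,
        Real.sq_sqrt (integral_nonneg fun y => sq_nonneg _)]
    have hib : ∫ y, h2 y = b ^ 2 := by
      rw [hbdef, L2, ← Real.sqrt_eq_rpow,
        Real.sq_sqrt (integral_nonneg fun y => sq_nonneg _)]
    have ha0 : 0 ≤ a := by
      rw [hadef, L2, ← Real.sqrt_eq_rpow]; exact Real.sqrt_nonneg _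
    have hb0 : 0 ≤ b := by
      rw [hbdef, L2, ← Real.sqrt_eq_rpow]; exact Real.sqrt_nonneg _
    have hgbd : g x ≤ (A₁ + 1) * (a + b) ^ 2 := by
      have : g x ≤ (A₁ + 1) * a ^ 2 + b ^ 2 := by
        rw [← hia, ← hib]; linarith [h1'.trans (h2'.trans h3')]
      nlinarith [mul_nonneg ha0 hb0]
    have hsqrt : Real.sqrt (W₁ x * W₂ x) * |f x| = Real.sqrt (g x) := by
      rw [hgdef]
      rw [Real.sqrt_mul (mul_pos (hW₁pos x) (hW₂pos x)).le, Real.sqrt_sq_eq_abs]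
    rw [hsqrt]
    calc Real.sqrt (g x) ≤ Real.sqrt ((A₁ + 1) * (a + b) ^ 2) := Real.sqrt_le_sqrt hgbd
      _ = Real.sqrt (A₁ + 1) * (a + b) := by
          rw [Real.sqrt_mul (by linarith), Real.sqrt_sq (by linarith)]
  · -- decay at infinity
    have hco : Tendsto g (Filter.cocompact ℝ) (nhds 0) := by
      rw [cocompact_eq_atBot_atTop]
      exact Tendsto.mono_left (tendsto_sup.2 ⟨hbot, htop⟩) le_rfl
    have hsg : Tendsto (fun x => Real.sqrt (g x)) (Filter.cocompact ℝ) (nhds 0) := by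
      have := (Real.continuous_sqrt.tendsto 0).comp hco
      simpa [Function.comp_def] using this
    refine squeeze_zero_norm (fun x => ?_) hsg
    rw [Real.norm_eq_abs, abs_mul,
      abs_of_nonneg (Real.sqrt_nonneg _), hgdef]
    rw [Real.sqrt_mul (mul_pos (hW₁pos x) (hW₂pos x)).le, Real.sqrt_sq_eq_abs]
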